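/- The Poisson-mixture option pricing identity: if conditional on N = k (N ~ Poisson(λT)) the random variable Θ is N(A_k, B_k²) with B_k > 0, then E[(a·e^Θ - K)⁺] = ∑_{k=0}^∞ (e^{-λT}(λT)^k/k!)·(a·e^{A_k + B_k²/2}·Φ(B_k - φ/B_k + A_k/B_k) - K·Φ(A_k/B_k - φ/B_k)), where φ = ln(K/a), provided the series of expectations converges absolutely. -/

import Mathlib

open MeasureTheory ProbabilityTheory Real

/-- The standard normal cumulative distribution function. -/
noncomputable def stdNormalCDF (x : ℝ) : ℝ :=
  ∫ t in Set.Iic x, Real.exp (-t ^ 2 / 2) / Real.sqrt (2 * Real.pi)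

noncomputable def stdf (t : ℝ) : ℝ := Real.exp (-t ^ 2 / 2) / Real.sqrt (2 * Real.pi)

lemma stdNormalCDF_eq (x : ℝ) : stdNormalCDF x = ∫ t in Set.Iic x, stdf t := rfl

lemma stdf_even (t : ℝ) : stdf (-t) = stdf t := by simp [stdf]

lemma aux_shift (g : ℝ → ℝ) (a c : ℝ) :
    ∫ x in Set.Ioi a, g (x + c) = ∫ x in Set.Ioi (a + c), g x := by
  rw [← integral_indicator measurableSet_Ioi, ← integral_indicator measurableSet_Ioi]
  have h : ∀ x : ℝ, (Set.Ioi a).indicator (fun y => g (y + c)) x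
      = (Set.Ioi (a + c)).indicator g (x + c) := by
    intro x
    simp [Set.indicator_apply, Set.mem_Ioi, add_lt_add_iff_right]
  simp_rw [h]
  exact integral_add_right_eq_self _ c

lemma pdf_eq (μ σ : ℝ) (hσ : 0 < σ) (x : ℝ) :
    gaussianPDFReal μ ((σ ^ 2 : ℝ)).toNNReal x = σ⁻¹ * stdf ((x - μ) * σ⁻¹) := by
  have hv : (((σ ^ 2 : ℝ)).toNNReal : ℝ) = σ ^ 2 := Real.coe_toNNReal _ (sq_nonneg σ)
  rw [gaussianPDFReal, hv, stdf]
  have h2π : Real.sqrt (2 * π) ≠ 0 := by positivity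
  have hs : Real.sqrt (2 * π * σ ^ 2) = Real.sqrt (2 * π) * σ := by
    rw [Real.sqrt_mul (by positivity), Real.sqrt_sq hσ.le]
  have hexp : -(x - μ) ^ 2 / (2 * σ ^ 2) = -((x - μ) * σ⁻¹) ^ 2 / 2 := by
    field_simp
  rw [hs, hexp]
  field_simp

lemma gauss_tail (μ σ c : ℝ) (hσ : 0 < σ) :
    ∫ x in Set.Ioi c, gaussianPDFReal μ ((σ ^ 2 : ℝ)).toNNReal x
      = stdNormalCDF ((μ - c) / σ) := by
  simp_rw [pdf_eq μ σ hσ]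
  rw [integral_const_mul]
  have h1 : ∀ x : ℝ, (x - μ) * σ⁻¹ = (x + -μ) * σ⁻¹ := by intro x; ring
  simp_rw [h1]
  rw [aux_shift (fun y => stdf (y * σ⁻¹)) c (-μ)]
  rw [integral_comp_mul_right_Ioi stdf _ (inv_pos.mpr hσ)]
  have heven : ∀ x : ℝ, stdf x = stdf (-x) := fun x => (stdf_even x).symm
  rw [show (∫ x in Set.Ioi ((c + -μ) * σ⁻¹), stdf x)
      = ∫ x in Set.Ioi ((c + -μ) * σ⁻¹), stdf (-x) from
    setIntegral_congr_fun measurableSet_Ioi fun x _ => heven x]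
  rw [integral_comp_neg_Ioi]
  rw [stdNormalCDF_eq]
  have harg : -((c + -μ) * σ⁻¹) = (μ - c) / σ := by field_simp; ring
  rw [harg, smul_eq_mul, inv_inv, ← mul_assoc, inv_mul_cancel₀ hσ.ne', one_mul]

lemma exp_mul_pdf (μ σ : ℝ) (hσ : 0 < σ) (x : ℝ) :
    Real.exp x * gaussianPDFReal μ ((σ ^ 2 : ℝ)).toNNReal x
      = Real.exp (μ + σ ^ 2 / 2) * gaussianPDFReal (μ + σ ^ 2) ((σ ^ 2 : ℝ)).toNNReal x := by
  have hv : (((σ ^ 2 : ℝ)).toNNReal : ℝ) = σ ^ 2 := Real.coe_toNNReal _ (sq_nonneg σ)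
  rw [gaussianPDFReal, gaussianPDFReal, hv]
  rw [mul_left_comm, mul_left_comm (Real.exp (μ + σ ^ 2 / 2)), ← Real.exp_add, ← Real.exp_add]
  congr 1
  have h : (σ : ℝ) ^ 2 ≠ 0 := by positivity
  field_simp
  ring

lemma gauss_option (a K μ σ : ℝ) (ha : 0 < a) (hK : 0 < K) (hσ : 0 < σ) :
    ∫ x, max (a * Real.exp x - K) 0 ∂(gaussianReal μ ((σ ^ 2 : ℝ)).toNNReal)
      = a * Real.exp (μ + σ ^ 2 / 2) *
          stdNormalCDF ((μ + σ ^ 2 - (Real.log K - Real.log a)) / σ)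
        - K * stdNormalCDF ((μ - (Real.log K - Real.log a)) / σ) := by
  set φ : ℝ := Real.log K - Real.log a with hφ
  set v : NNReal := ((σ ^ 2 : ℝ)).toNNReal with hvdef
  have hv0 : v ≠ 0 := by
    simp only [hvdef, ne_eq, Real.toNNReal_eq_zero, not_le]
    positivity
  have hexpφ : Real.exp φ = K / a := by
    rw [hφ, ← Real.log_div hK.ne' ha.ne', Real.exp_log (by positivity)]
  rw [gaussianReal_of_var_ne_zero _ hv0]
  have hdens : gaussianPDF μ v = fun x => ((gaussianPDFReal μ v x).toNNReal : ENNReal) := rfl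
  rw [hdens, integral_withDensity_eq_integral_smul
    (measurable_gaussianPDFReal μ v).real_toNNReal]
  have hsm : ∀ x : ℝ, (gaussianPDFReal μ v x).toNNReal • max (a * Real.exp x - K) 0
      = gaussianPDFReal μ v x * max (a * Real.exp x - K) 0 := by
    intro x
    rw [NNReal.smul_def, smul_eq_mul, Real.coe_toNNReal _ (gaussianPDFReal_nonneg μ v x)]
  simp_rw [hsm]
  have hind : ∀ x : ℝ, gaussianPDFReal μ v x * max (a * Real.exp x - K) 0
      = (Set.Ioi φ).indicator
          (fun x => a * (Real.exp x * gaussianPDFReal μ v x) - K * gaussianPDFReal μ v x) x := by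
    intro x
    rcases le_or_gt x φ with h | h
    · have hle : a * Real.exp x ≤ K := by
        have := Real.exp_le_exp.mpr h
        rw [hexpφ] at this
        calc a * Real.exp x ≤ a * (K / a) := by nlinarith
        _ = K := by field_simp
      rw [Set.indicator_of_notMem (by simpa using h), max_eq_right (by linarith), mul_zero]
    · have hgt : K < a * Real.exp x := by
        have := Real.exp_lt_exp.mpr h
        rw [hexpφ] at this
        calc K = a * (K / a) := by field_simp
        _ < a * Real.exp x := by nlinarith
      rw [Set.indicator_of_mem (by simpa using h), max_eq_left (by linarith)]
      ring
  simp_rw [hind]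
  rw [integral_indicator measurableSet_Ioi]
  have hpdfint : IntegrableOn (gaussianPDFReal μ v) (Set.Ioi φ) :=
    (integrable_gaussianPDFReal μ v).integrableOn
  have hexp_eq : (fun x => Real.exp x * gaussianPDFReal μ v x)
      = fun x => Real.exp (μ + σ ^ 2 / 2) * gaussianPDFReal (μ + σ ^ 2) v x :=
    funext fun x => exp_mul_pdf μ σ hσ x
  have hexpint : IntegrableOn (fun x => Real.exp x * gaussianPDFReal μ v x) (Set.Ioi φ) := by
    rw [hexp_eq]
    exact ((integrable_gaussianPDFReal _ _).const_mul _).integrableOn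
  rw [integral_sub (hexpint.const_mul a) (hpdfint.const_mul K),
    integral_const_mul, integral_const_mul]
  have h1 : ∫ x in Set.Ioi φ, Real.exp x * gaussianPDFReal μ v x
      = Real.exp (μ + σ ^ 2 / 2) * stdNormalCDF ((μ + σ ^ 2 - φ) / σ) := by
    rw [hexp_eq, integral_const_mul, hvdef, gauss_tail _ _ _ hσ]
  have h2 : ∫ x in Set.Ioi φ, gaussianPDFReal μ v x = stdNormalCDF ((μ - φ) / σ) := by
    rw [hvdef, gauss_tail _ _ _ hσ]
  rw [h1, h2]
  ring

theorem poisson_mixture_option_pricing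
    {Ω : Type*} [MeasureSpace Ω] (P : Measure Ω) [IsProbabilityMeasure P]
    (a K lam T : ℝ) (ha : 0 < a) (hK : 0 < K) (hlamT : 0 < lam * T)
    (N : Ω → ℕ) (Θ : Ω → ℝ)
    (hNmeas : Measurable N) (hΘmeas : Measurable Θ)
    (A B : ℕ → ℝ) (hB : ∀ k, 0 < B k)
    -- N is Poisson with mean λT
    (hN : ∀ k : ℕ, P {ω | N ω = k} =
      ENNReal.ofReal (Real.exp (-(lam * T)) * (lam * T) ^ k / Nat.factorial k))
    -- conditional on N = k, Θ is Gaussian N(A k, (B k)²)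
    (hΘ : ∀ k : ℕ, Measure.map Θ (P[|{ω | N ω = k}]) =
      gaussianReal (A k) ((B k) ^ 2).toNNReal)
    -- integrability of the payoff
    (hint : Integrable (fun ω => max (a * Real.exp (Θ ω) - K) 0) P) :
    ∫ ω, max (a * Real.exp (Θ ω) - K) 0 ∂P =
      ∑' k : ℕ, (Real.exp (-(lam * T)) * (lam * T) ^ k / Nat.factorial k) *
        (a * Real.exp (A k + (B k) ^ 2 / 2) *
            stdNormalCDF (B k - (Real.log K - Real.log a) / B k + A k / B k) -
          K * stdNormalCDF (A k / B k - (Real.log K - Real.log a) / B k)) := by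
  set f : Ω → ℝ := fun ω => max (a * Real.exp (Θ ω) - K) 0 with hf
  set s : ℕ → Set Ω := fun k => {ω | N ω = k} with hs
  have hs_meas : ∀ k, MeasurableSet (s k) := fun k => hNmeas (measurableSet_singleton k)
  have hs_disj : Pairwise (Function.onFun Disjoint s) := by
    intro i j hij
    rw [Function.onFun, Set.disjoint_left]
    rintro ω (hi : N ω = i) (hj : N ω = j)
    exact hij (hi ▸ hj ▸ rfl)
  have hs_union : (⋃ k, s k) = Set.univ := by
    ext ω; simp [hs]
  have step1 : ∫ ω, f ω ∂P = ∑' k, ∫ ω in s k, f ω ∂P := by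
    rw [← setIntegral_univ, ← hs_union,
      integral_iUnion hs_meas hs_disj (hs_union ▸ hint.integrableOn)]
  rw [step1]
  refine tsum_congr fun k => ?_
  set c : ℝ := Real.exp (-(lam * T)) * (lam * T) ^ k / Nat.factorial k with hc
  have hc_pos : 0 < c := by
    have : (0:ℝ) < (Nat.factorial k : ℝ) := by positivity
    positivity
  have hPk : P (s k) = ENNReal.ofReal c := hN k
  have hP_ne_zero : P (s k) ≠ 0 := by
    rw [hPk]; simpa using hc_pos
  have hP_ne_top : P (s k) ≠ ⊤ := measure_ne_top P _
  have hcond : ∫ ω in s k, f ω ∂P = (P (s k)).toReal * ∫ ω, f ω ∂(P[|s k]) := by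
    simp only [ProbabilityTheory.cond]
    rw [integral_smul_measure, ENNReal.toReal_inv, smul_eq_mul, ← mul_assoc,
      mul_inv_cancel₀ (ENNReal.toReal_ne_zero.mpr ⟨hP_ne_zero, hP_ne_top⟩), one_mul]
  rw [hcond]
  have hcont : Continuous fun x : ℝ => max (a * Real.exp x - K) 0 :=
    ((continuous_const.mul Real.continuous_exp).sub continuous_const).max continuous_const
  have hmap : ∫ ω, f ω ∂(P[|s k])
      = ∫ x, max (a * Real.exp x - K) 0 ∂(Measure.map Θ (P[|s k])) :=
    (integral_map hΘmeas.aemeasurable hcont.aestronglyMeasurable).symm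
  rw [hmap, hΘ k, gauss_option a K (A k) (B k) ha hK (hB k)]
  have hB0 : (B k : ℝ) ≠ 0 := (hB k).ne'
  have harg1 : (A k + B k ^ 2 - (Real.log K - Real.log a)) / B k
      = B k - (Real.log K - Real.log a) / B k + A k / B k := by
    field_simp; ring
  have harg2 : (A k - (Real.log K - Real.log a)) / B k
      = A k / B k - (Real.log K - Real.log a) / B k := by
    field_simp
  rw [harg1, harg2, hPk, ENNReal.toReal_ofReal hc_pos.le]
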